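/- Let m ≤ n+1, f ∈ H_d[m] with f ≠ 0, and η > 0 be such that sep(η) := η√(n+1) ≤ 1/2. If x ∈ S^n satisfies ‖f(x)‖ > δ(f,η) := 1.1·√(D(n+1))·‖f‖·η, then f(y) ≠ 0 for every y in the open Euclidean ball B(x, sep(η)) ⊂ ℝ^{n+1}. -/

import Mathlib

open Function Metric Filter
open scoped ENNReal

noncomputable section

/-- Evaluation of a polynomial system as a map between Euclidean spaces. -/
def evalSys {n m : ℕ} (f : Fin m → MvPolynomial (Fin (n + 1)) ℝ) :
    EuclideanSpace ℝ (Fin (n + 1)) → EuclideanSpace ℝ (Fin m) :=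
  fun x => WithLp.toLp 2 (fun i => MvPolynomial.eval (fun j => x j) (f i))

/-- Moore–Penrose inverse A† = Aᵀ (A Aᵀ)⁻¹ of a (surjective) continuous linear map
between real inner product spaces. -/
def pinv {E F : Type*} [NormedAddCommGroup E] [InnerProductSpace ℝ E] [CompleteSpace E]
    [NormedAddCommGroup F] [InnerProductSpace ℝ F] [CompleteSpace F]
    (A : E →L[ℝ] F) : F →L[ℝ] E :=
  (ContinuousLinearMap.adjoint A).comp (Ring.inverse (A.comp (ContinuousLinearMap.adjoint A)))

/-- The diagonal matrix Δ(x) with diagonal entries ‖x‖^(dᵢ−1)·√dᵢ, as a linear map ℝ^m → ℝ^m. -/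
def Delta {n m : ℕ} (d : Fin m → ℕ) (x : EuclideanSpace ℝ (Fin (n + 1))) :
    EuclideanSpace ℝ (Fin m) →L[ℝ] EuclideanSpace ℝ (Fin m) :=
  LinearMap.toContinuousLinearMap
    (Matrix.toEuclideanLin (Matrix.diagonal fun i => ‖x‖ ^ (d i - 1) * Real.sqrt (d i)))

/-- Weyl norm squared of a polynomial system: Σᵢ Σ_a coeff²·(dᵢ choose a)⁻¹. -/
def weylNormSq {n m : ℕ} (f : Fin m → MvPolynomial (Fin (n + 1)) ℝ) : ℝ :=
  ∑ i, ∑ a ∈ (f i).support, ((f i).coeff a) ^ 2 / (Nat.multinomial a.support a : ℝ)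

/-- Weyl norm of a polynomial system. -/
def weylNorm {n m : ℕ} (f : Fin m → MvPolynomial (Fin (n + 1)) ℝ) : ℝ :=
  Real.sqrt (weylNormSq f)

/-- μ_norm(f,x) = ‖f‖·‖Df(x)†·Δ(x)‖ (real-valued formula, meaningful when Df(x) is surjective). -/
def munormR {n m : ℕ} (d : Fin m → ℕ) (f : Fin m → MvPolynomial (Fin (n + 1)) ℝ)
    (x : EuclideanSpace ℝ (Fin (n + 1))) : ℝ :=
  weylNorm f * ‖(pinv (fderiv ℝ (evalSys f) x)).comp (Delta d x)‖

open Classical in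
/-- μ_norm(f,x), with value ∞ when Df(x) is not surjective. -/
def munormE {n m : ℕ} (d : Fin m → ℕ) (f : Fin m → MvPolynomial (Fin (n + 1)) ℝ)
    (x : EuclideanSpace ℝ (Fin (n + 1))) : ℝ≥0∞ :=
  if Surjective ⇑(fderiv ℝ (evalSys f) x) then ENNReal.ofReal (munormR d f x) else ⊤

/-- The maximal degree D. -/
def Dmax {m : ℕ} (d : Fin m → ℕ) : ℕ := Finset.univ.sup d




/-- multinomial is insensitive to enlarging the index set by zeros -/
lemma multinomial_superset {α : Type*} [DecidableEq α] {s t : Finset α} (f : α → ℕ)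
    (hst : s ⊆ t) (h : ∀ i ∈ t, i ∉ s → f i = 0) :
    Nat.multinomial t f = Nat.multinomial s f := by
  unfold Nat.multinomial
  rw [← Finset.sum_subset hst h, ← Finset.prod_subset hst (fun i hi his => by
    rw [h i hi his]; rfl)]

/-- Multinomial theorem over `finsuppAntidiag`. -/
lemma mt_finsupp {N d : ℕ} (t : Fin N → ℝ) :
    (∑ j, t j) ^ d =
      ∑ a ∈ Finset.finsuppAntidiag (Finset.univ : Finset (Fin N)) d,
        (Nat.multinomial a.support a : ℝ) * ∏ j, t j ^ a j := by
  classical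
  rw [Finset.sum_pow_eq_sum_piAntidiag_of_commute _ t (fun _ _ _ _ _ => Commute.all _ _) d]
  refine Finset.sum_nbij' (fun k => Finsupp.equivFunOnFinite.symm k) (fun a => ⇑a)
    ?_ ?_ ?_ ?_ ?_
  · intro k hk
    rw [Finset.mem_piAntidiag] at hk
    rw [Finset.mem_finsuppAntidiag]
    constructor
    · simpa using hk.1
    · exact Finset.subset_univ _
  · intro a ha
    rw [Finset.mem_finsuppAntidiag] at ha
    rw [Finset.mem_piAntidiag]
    exact ⟨by simpa using ha.1, fun i _ => Finset.mem_univ i⟩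
  · intro k hk
    ext i
    rfl
  · intro a ha; simp
  · intro k hk
    rw [Finset.noncommProd_eq_prod]
    congr 1
    show (Nat.multinomial Finset.univ k : ℝ) =
      (Nat.multinomial (Finsupp.equivFunOnFinite.symm k).support k : ℝ)
    exact_mod_cast congrArg Nat.cast (multinomial_superset
      (s := (Finsupp.equivFunOnFinite.symm k).support) k (Finset.subset_univ _)
      (fun i _ his => Finsupp.notMem_support_iff.mp his))


lemma support_subset_antidiag {N d : ℕ} {p : MvPolynomial (Fin N) ℝ}
    (hp : p.IsHomogeneous d) :
    p.support ⊆ Finset.finsuppAntidiag (Finset.univ : Finset (Fin N)) d := by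
  intro a ha
  rw [Finset.mem_finsuppAntidiag]
  refine ⟨?_, Finset.subset_univ _⟩
  have hdeg : a.degree = d := by
    rw [Finsupp.degree_eq_weight_one]
    exact hp (MvPolynomial.mem_support_iff.mp ha)
  rw [← hdeg, Finsupp.degree]
  exact (Finset.sum_subset (Finset.subset_univ _)
    (fun i _ hi => Finsupp.notMem_support_iff.mp hi)).symm

lemma key_ineq {N : ℕ} {p : MvPolynomial (Fin N) ℝ} {d : ℕ} (hp : p.IsHomogeneous d)
    (u v : Fin N → ℝ) :
    (MvPolynomial.eval u p - MvPolynomial.eval v p) ^ 2 ≤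
      (∑ a ∈ p.support, (p.coeff a) ^ 2 / (Nat.multinomial a.support a : ℝ)) *
      ((∑ j, u j ^ 2) ^ d + (∑ j, v j ^ 2) ^ d - 2 * (∑ j, u j * v j) ^ d) := by
  classical
  set T := Finset.finsuppAntidiag (Finset.univ : Finset (Fin N)) d with hT
  have hsub := support_subset_antidiag hp
  set C : (Fin N →₀ ℕ) → ℝ := fun a => (Nat.multinomial a.support a : ℝ) with hC
  have hCpos : ∀ a : Fin N →₀ ℕ, 0 < C a := fun a => by
    have := Nat.multinomial_pos a.support ⇑a
    show (0:ℝ) < (Nat.multinomial a.support ⇑a : ℝ)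
    exact_mod_cast this
  set g : (Fin N →₀ ℕ) → ℝ := fun a => ∏ j, u j ^ a j with hg
  set h : (Fin N →₀ ℕ) → ℝ := fun a => ∏ j, v j ^ a j with hh
  have hev : ∀ w : Fin N → ℝ,
      MvPolynomial.eval w p = ∑ a ∈ T, p.coeff a * ∏ j, w j ^ a j := by
    intro w
    rw [MvPolynomial.eval_eq']
    exact Finset.sum_subset hsub (fun a _ ha => by
      rw [MvPolynomial.notMem_support_iff.mp ha, zero_mul])
  have hdiff : MvPolynomial.eval u p - MvPolynomial.eval v p =
      ∑ a ∈ T, (p.coeff a / Real.sqrt (C a)) * (Real.sqrt (C a) * (g a - h a)) := by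
    rw [hev u, hev v, ← Finset.sum_sub_distrib]
    refine Finset.sum_congr rfl fun a _ => ?_
    have h0 : Real.sqrt (C a) ≠ 0 := by
      have := Real.sqrt_pos.mpr (hCpos a)
      linarith
    field_simp
    ring
  have CS := Finset.sum_mul_sq_le_sq_mul_sq T (fun a => p.coeff a / Real.sqrt (C a))
    (fun a => Real.sqrt (C a) * (g a - h a))
  rw [← hdiff] at CS
  have e1 : ∑ a ∈ T, (p.coeff a / Real.sqrt (C a)) ^ 2
      = ∑ a ∈ p.support, (p.coeff a) ^ 2 / C a := by
    rw [← Finset.sum_subset hsub (fun a _ ha => by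
      rw [MvPolynomial.notMem_support_iff.mp ha]; simp)]
    refine Finset.sum_congr rfl fun a _ => ?_
    rw [div_pow, Real.sq_sqrt (hCpos a).le]
  have h1 : (∑ j, u j ^ 2) ^ d = ∑ a ∈ T, C a * (g a) ^ 2 := by
    rw [mt_finsupp]
    refine Finset.sum_congr rfl fun a _ => ?_
    congr 1
    rw [hg, ← Finset.prod_pow]
    exact Finset.prod_congr rfl fun j _ => pow_right_comm (u j) 2 (a j)
  have h2 : (∑ j, v j ^ 2) ^ d = ∑ a ∈ T, C a * (h a) ^ 2 := by
    rw [mt_finsupp]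
    refine Finset.sum_congr rfl fun a _ => ?_
    congr 1
    rw [hh, ← Finset.prod_pow]
    exact Finset.prod_congr rfl fun j _ => pow_right_comm (v j) 2 (a j)
  have h3 : (∑ j, u j * v j) ^ d = ∑ a ∈ T, C a * (g a * h a) := by
    rw [mt_finsupp]
    refine Finset.sum_congr rfl fun a _ => ?_
    congr 1
    rw [hg, hh, ← Finset.prod_mul_distrib]
    exact Finset.prod_congr rfl fun j _ => mul_pow (u j) (v j) (a j)
  have e2 : ∑ a ∈ T, (Real.sqrt (C a) * (g a - h a)) ^ 2
      = (∑ j, u j ^ 2) ^ d + (∑ j, v j ^ 2) ^ d - 2 * (∑ j, u j * v j) ^ d := by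
    rw [h1, h2, h3, ← Finset.sum_add_distrib, Finset.mul_sum, ← Finset.sum_sub_distrib]
    refine Finset.sum_congr rfl fun a _ => ?_
    have hs : Real.sqrt (C a) ^ 2 = C a := Real.sq_sqrt (hCpos a).le
    rw [mul_pow, hs]
    ring
  rw [e1, e2] at CS
  exact CS

lemma eval_mul_smul {N : ℕ} {p : MvPolynomial (Fin N) ℝ} {d : ℕ}
    (hp : p.IsHomogeneous d) (c : ℝ) (w : Fin N → ℝ) :
    MvPolynomial.eval (fun j => c * w j) p = c ^ d * MvPolynomial.eval w p := by
  classical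
  rw [MvPolynomial.eval_eq', MvPolynomial.eval_eq', Finset.mul_sum]
  refine Finset.sum_congr rfl fun a ha => ?_
  have hdeg : Finset.univ.sum ⇑a = d :=
    (Finset.mem_finsuppAntidiag.mp (support_subset_antidiag hp ha)).1
  rw [Finset.prod_congr rfl (fun j _ => mul_pow c (w j) (a j)), Finset.prod_mul_distrib,
    Finset.prod_pow_eq_pow_sum, hdeg]
  ring

lemma one_sub_pow_le' (c : ℝ) (hc : -1 ≤ c) (hc1 : c ≤ 1) (d : ℕ) :
    1 - c ^ d ≤ d * (1 - c) := by
  induction d with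
  | zero => simp
  | succ k ih =>
    have hk : c ^ k ≤ 1 := by
      calc c ^ k ≤ |c ^ k| := le_abs_self _
      _ = |c| ^ k := abs_pow c k
      _ ≤ 1 := pow_le_one₀ (abs_nonneg c) (abs_le.mpr ⟨hc, hc1⟩)
    have h2 : c ^ k * (1 - c) ≤ 1 * (1 - c) :=
      mul_le_mul_of_nonneg_right hk (by linarith)
    rw [pow_succ]
    push_cast
    nlinarith [ih]


lemma esum_sq {k : ℕ} (w : EuclideanSpace ℝ (Fin k)) : ∑ j, w j ^ 2 = ‖w‖ ^ 2 := by
  rw [EuclideanSpace.norm_eq, Real.sq_sqrt (Finset.sum_nonneg fun j _ => by positivity)]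
  exact Finset.sum_congr rfl fun j _ => by rw [Real.norm_eq_abs, sq_abs]

lemma geo_aux {t b r c : ℝ} (htsq : t ^ 2 = 1 + b ^ 2 - 2 * (b * c))
    (ht : t < r) (ht0 : 0 ≤ t) (hr0 : 0 < r) (hr2 : r ≤ 1 / 2) (hb0 : 0 < b) :
    2 - 2 * c < 1.21 * r ^ 2 := by
  have hkey : b * (2 - 2 * c) = t ^ 2 - (1 - b) ^ 2 := by linear_combination -htsq
  have h2 : t ^ 2 - (1 - b) ^ 2 < 1.21 * r ^ 2 * b := by
    rcases le_or_gt 1 (1.21 * b) with hcase | hcase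
    · nlinarith [sq_nonneg (1 - b),
        mul_pos (show 0 < r - t by linarith) (show 0 < r + t by linarith),
        mul_nonneg (show (0:ℝ) ≤ 1.21 * b - 1 by linarith) (sq_nonneg r)]
    · nlinarith [sq_nonneg (2 * b - 1.6975),
        mul_pos (show 0 < r - t by linarith) (show 0 < r + t by linarith),
        mul_nonneg (show (0:ℝ) ≤ 1 - 1.21 * b by linarith)
          (show (0:ℝ) ≤ 1 / 4 - r ^ 2 by nlinarith)]
  nlinarith [hkey, h2, hb0]

lemma final_contra {A W2 D r c : ℝ} (hA : A ^ 2 ≤ W2 * (D * (2 - 2 * c)))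
    (hgeo : 2 - 2 * c < 1.21 * r ^ 2)
    (hfx2 : 1.21 * (D * (W2 * r ^ 2)) < A ^ 2) (hW2 : 0 ≤ W2) (hD : 0 < D) : False := by
  nlinarith [mul_nonneg hW2 hD.le]

set_option maxHeartbeats 1000000 in
/-- (Corollary `excl`.) If sep(η) = η√(n+1) ≤ 1/2 and x ∈ Sⁿ satisfies
‖f(x)‖ > δ(f,η) = 1.1·√(D(n+1))·‖f‖·η, then f has no zero in the Euclidean ball
B(x, sep(η)). -/
theorem statement10 {n m : ℕ} (hm : m ≤ n + 1) (d : Fin m → ℕ) (hd : ∀ i, 1 ≤ d i)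
    (f : Fin m → MvPolynomial (Fin (n + 1)) ℝ) (hf : ∀ i, (f i).IsHomogeneous (d i))
    (hf0 : f ≠ 0)
    (η : ℝ) (hη0 : 0 < η) (hη : η * Real.sqrt (n + 1) ≤ 1 / 2)
    (x : EuclideanSpace ℝ (Fin (n + 1)))
    (hx : x ∈ Metric.sphere (0 : EuclideanSpace ℝ (Fin (n + 1))) 1)
    (hfx : ‖evalSys f x‖ > 1.1 * Real.sqrt ((Dmax d) * (n + 1)) * weylNorm f * η) :
    ∀ y ∈ Metric.ball x (η * Real.sqrt (n + 1)), evalSys f y ≠ 0 := by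
  classical
  intro y hy hy0
  rcases Nat.eq_zero_or_pos m with hm0 | hm0
  · subst hm0
    exact hf0 (funext fun i => i.elim0)
  set r : ℝ := η * Real.sqrt (n + 1) with hr
  have hn1 : (0:ℝ) < Real.sqrt (n+1) := Real.sqrt_pos.mpr (by positivity)
  have hr0 : 0 < r := mul_pos hη0 hn1
  have hr2 : r ≤ 1/2 := hη
  have hx1 : ‖x‖ = 1 := by rwa [mem_sphere_zero_iff_norm] at hx
  have ht : ‖x - y‖ < r := by rw [mem_ball, dist_comm, dist_eq_norm] at hy; exact hy
  set t := ‖x - y‖ with htd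
  have ht0 : 0 ≤ t := norm_nonneg _
  set b := ‖y‖ with hbd
  have hb1 : 1 - b ≤ t := by
    have h := norm_sub_norm_le x y
    rw [hx1] at h; linarith
  have hb2 : b - 1 ≤ t := by
    have h := norm_sub_norm_le y x
    rw [hx1, norm_sub_rev] at h; linarith
  have hb0 : 0 < b := by linarith
  set z : EuclideanSpace ℝ (Fin (n+1)) := b⁻¹ • y with hzd
  have hz1 : ‖z‖ = 1 := by
    rw [hzd, norm_smul, Real.norm_eq_abs, abs_of_pos (inv_pos.mpr hb0), ← hbd,
      inv_mul_cancel₀ hb0.ne']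
  have Sx : ∑ j, x j ^ 2 = 1 := by rw [esum_sq x, hx1]; norm_num
  have Sz : ∑ j, z j ^ 2 = 1 := by rw [esum_sq z, hz1]; norm_num
  have Sy : ∑ j, y j ^ 2 = b ^ 2 := by rw [esum_sq y]
  set c := ∑ j, x j * z j with hcd
  have hbc : b * c = ∑ j, x j * y j := by
    rw [hcd, Finset.mul_sum]
    refine Finset.sum_congr rfl fun j _ => ?_
    have hzj : z j = b⁻¹ * y j := rfl
    rw [hzj]
    field_simp
  have hxy : ∑ j, (x j - y j) ^ 2 = t ^ 2 := by
    rw [htd, ← esum_sq (x - y)]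
    exact Finset.sum_congr rfl fun j _ => by rw [show (x - y) j = x j - y j from rfl]
  have e : ∑ j, (x j - y j) ^ 2
      = (∑ j, x j ^ 2) + (∑ j, y j ^ 2) - 2 * (∑ j, x j * y j) := by
    rw [Finset.mul_sum, ← Finset.sum_add_distrib, ← Finset.sum_sub_distrib]
    exact Finset.sum_congr rfl fun j _ => by ring
  have htsq : t ^ 2 = 1 + b ^ 2 - 2 * (b * c) := by
    rw [← hxy, e, Sx, Sy, hbc]
  have hCS : c ^ 2 ≤ 1 := by
    have h := Finset.sum_mul_sq_le_sq_mul_sq Finset.univ (fun j => x j) (fun j => z j)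
    rw [hcd]
    calc (∑ j, x j * z j) ^ 2 ≤ (∑ j, x j ^ 2) * ∑ j, z j ^ 2 := h
      _ = 1 := by rw [Sx, Sz, one_mul]
  have habs : |c| ≤ 1 := by
    have h1 : |c| ^ 2 ≤ 1 ^ 2 := by rw [one_pow, sq_abs]; exact hCS
    exact (pow_le_pow_iff_left₀ (abs_nonneg c) one_pos.le (by norm_num)).mp h1
  have hc1 : c ≤ 1 := (abs_le.mp habs).2
  have hcneg : -1 ≤ c := (abs_le.mp habs).1
  have hgeo : 2 - 2*c < 1.21 * r^2 := geo_aux htsq ht ht0 hr0 hr2 hb0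
  -- evaluation bounds
  set D : ℕ := Dmax d with hDd
  have hDi : ∀ i, d i ≤ D := fun i => Finset.le_sup (Finset.mem_univ i)
  have hD1 : 1 ≤ D := le_trans (hd ⟨0, hm0⟩) (hDi _)
  have hW2i : ∀ i, (0:ℝ) ≤ ∑ a ∈ (f i).support,
      ((f i).coeff a) ^ 2 / (Nat.multinomial a.support a : ℝ) :=
    fun i => Finset.sum_nonneg fun a _ => by positivity
  have hzero : ∀ i, MvPolynomial.eval (fun j => z j) (f i) = 0 := by
    intro i
    have hyi : MvPolynomial.eval (fun j => y j) (f i) = 0 := congrArg (fun v => v i) hy0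
    have h := eval_mul_smul (hf i) b⁻¹ (fun j => y j)
    calc MvPolynomial.eval (fun j => z j) (f i)
        = b⁻¹ ^ (d i) * MvPolynomial.eval (fun j => y j) (f i) := h
      _ = 0 := by rw [hyi, mul_zero]
  have hAi : ∀ i, (MvPolynomial.eval (fun j => x j) (f i))^2
      ≤ (∑ a ∈ (f i).support, ((f i).coeff a) ^ 2 / (Nat.multinomial a.support a : ℝ))
        * ((D:ℝ) * (2 - 2*c)) := by
    intro i
    have hk := key_ineq (hf i) (fun j => x j) (fun j => z j)
    rw [hzero i, sub_zero, Sx, Sz, one_pow] at hk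
    refine hk.trans (mul_le_mul_of_nonneg_left ?_ (hW2i i))
    have h1 := one_sub_pow_le' c hcneg hc1 (d i)
    have h3 : ((d i : ℝ)) * (1 - c) ≤ (D:ℝ) * (1-c) :=
      mul_le_mul_of_nonneg_right (by exact_mod_cast hDi i) (by linarith)
    linarith
  have hA : ‖evalSys f x‖^2 ≤ weylNormSq f * ((D:ℝ) * (2-2*c)) := by
    have hA1 : ‖evalSys f x‖^2 = ∑ i, (MvPolynomial.eval (fun j => x j) (f i))^2 :=
      (esum_sq (evalSys f x)).symm
    rw [hA1, weylNormSq, Finset.sum_mul]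
    exact Finset.sum_le_sum fun i _ => hAi i
  -- final contradiction
  have hW2 : 0 ≤ weylNormSq f := Finset.sum_nonneg fun i _ => hW2i i
  have hWsq : weylNorm f ^ 2 = weylNormSq f := Real.sq_sqrt hW2
  have hW0 : 0 ≤ weylNorm f := Real.sqrt_nonneg _
  have hrhs : 1.1 * Real.sqrt ((D:ℝ) * ((n:ℝ) + 1)) * weylNorm f * η
      = 1.1 * Real.sqrt D * weylNorm f * r := by
    rw [Real.sqrt_mul (by positivity), hr]
    ring
  have hDpos : (0:ℝ) < (D:ℝ) := by exact_mod_cast hD1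
  have hsqD : Real.sqrt D ^ 2 = (D:ℝ) := Real.sq_sqrt hDpos.le
  have hfx' : ‖evalSys f x‖ > 1.1 * Real.sqrt D * weylNorm f * r := by
    rw [← hrhs]; exact hfx
  have hA0 : 0 ≤ 1.1 * Real.sqrt D * weylNorm f * r := by positivity
  have hfx2 : (1.1 * Real.sqrt D * weylNorm f * r)^2 < ‖evalSys f x‖^2 := by
    exact pow_lt_pow_left₀ hfx' hA0 (by norm_num)
  have hexp : (1.1 * Real.sqrt D * weylNorm f * r)^2
      = 1.21 * ((D:ℝ) * (weylNormSq f * r^2)) := by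
    rw [mul_pow, mul_pow, mul_pow, hsqD, hWsq]
    norm_num
    ring
  rw [hexp] at hfx2
  exact final_contra hA hgeo hfx2 hW2 hDpos
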